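/- For any word w, the map sending a linear extension e of P(w) to the word w(e) defined by w(e)_i = w_{e^{-1}(i)} is a bijection from the set of linear extensions of P(w) onto the commutation class of w. -/

import Mathlib

def CommMove {S : Type*} (comm : S → S → Prop) (w w' : List S) : Prop :=
  ∃ (u v : List S) (a b : S), comm a b ∧ w = u ++ a :: b :: v ∧ w' = u ++ b :: a :: v

def CommClass {S : Type*} (comm : S → S → Prop) : List S → List S → Prop :=
  Relation.ReflTransGen (CommMove comm)

def WStep {S : Type*} (comm : S → S → Prop) (w : List S) (i j : Fin w.length) : Prop :=
  i ≤ j ∧ (w.get i = w.get j ∨ ¬ comm (w.get i) (w.get j))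

/-- The word-poset order `≤_w` on positions of `w`. -/
def WLe {S : Type*} (comm : S → S → Prop) (w : List S) : Fin w.length → Fin w.length → Prop :=
  Relation.TransGen (WStep comm w)

/-- A linear extension of the word poset `P(w)`. -/
def IsLinExt {S : Type*} (comm : S → S → Prop) (w : List S)
    (e : Fin w.length ≃ Fin w.length) : Prop :=
  ∀ i j, WLe comm w i j → e i ≤ e j

/-- The word `w(e)` associated to a linear extension `e`: `w(e)_i = w_{e⁻¹(i)}`. -/
def wordOf {S : Type*} (w : List S) (e : Fin w.length ≃ Fin w.length) : List S :=
  List.ofFn (fun i => w.get (e.symm i))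

section Helpers

variable {S : Type*} {comm : S → S → Prop} {w : List S}

lemma wle_le {i j : Fin w.length} (h : WLe comm w i j) : i ≤ j := by
  induction h with
  | single h => exact h.1
  | tail _ h ih => exact le_trans ih h.1

lemma fin_le_apply {n : ℕ} {f : Fin n → Fin n} (hf : StrictMono f) (i : Fin n) : i ≤ f i := by
  have key : ∀ m : ℕ, ∀ hm : m < n, m ≤ (f ⟨m, hm⟩ : Fin n).val := by
    intro m
    induction m with
    | zero => intro hm; exact Nat.zero_le _
    | succ k ih =>
      intro hm
      have hk : k < n := by omega
      have h1 : (⟨k, hk⟩ : Fin n) < ⟨k + 1, hm⟩ := by simp [Fin.lt_def]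
      have h2 := hf h1
      have h3 := ih hk
      rw [Fin.lt_def] at h2
      omega
  have := key i.val i.isLt
  rw [Fin.le_def]
  simpa using this

lemma strictMono_of_succ {n : ℕ} {g : Fin n → Fin n}
    (h : ∀ (k : ℕ) (hk : k + 1 < n), g ⟨k, by omega⟩ < g ⟨k + 1, hk⟩) : StrictMono g := by
  have key : ∀ m (hm : m < n) (i : Fin n), i.val < m → g i < g ⟨m, hm⟩ := by
    intro m
    induction m with
    | zero => intro hm i hi; omega
    | succ k ih =>
      intro hm i hi
      rcases Nat.lt_or_ge i.val k with h' | h'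
      · exact lt_trans (ih (by omega) i h') (h k hm)
      · have hik : i = ⟨k, by omega⟩ := Fin.ext (show i.val = k by omega)
        rw [hik]; exact h k hm
  intro i j hij
  have := key j.val j.isLt i hij
  simpa using this

lemma equiv_eq_refl_of_strictMono {n : ℕ} {e : Fin n ≃ Fin n} (h : StrictMono e) :
    e = Equiv.refl _ := by
  have hsymm : StrictMono e.symm := by
    intro i j hij
    rcases lt_trichotomy (e.symm i) (e.symm j) with h' | h' | h'
    · exact h'
    · exact absurd (e.symm.injective h') hij.ne
    · have := h h'
      simp only [Equiv.apply_symm_apply] at this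
      exact absurd hij (lt_asymm this)
  have h1 : ∀ i, i ≤ e i := fin_le_apply h
  have h2 : ∀ i, i ≤ e.symm i := fin_le_apply hsymm
  ext i
  have h3 : e i ≤ i := by
    have := h.monotone (h2 i)
    rwa [Equiv.apply_symm_apply] at this
  exact le_antisymm h3 (h1 i)

lemma swap_mono {n : ℕ} {k k' x y : Fin n} (hkk : (k' : ℕ) = (k : ℕ) + 1)
    (hxy : x ≤ y) (hexcl : ¬(x = k ∧ y = k')) : Equiv.swap k k' x ≤ Equiv.swap k k' y := by
  have key : ∀ z : Fin n, ((Equiv.swap k k' z : Fin n) : ℕ) =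
      if (z : ℕ) = (k : ℕ) then (k' : ℕ) else if (z : ℕ) = (k' : ℕ) then (k : ℕ) else (z : ℕ) := by
    intro z
    rcases eq_or_ne z k with rfl | hz1
    · simp
    · rcases eq_or_ne z k' with rfl | hz2
      · rw [Equiv.swap_apply_right, if_neg (by omega), if_pos rfl]
      · rw [Equiv.swap_apply_of_ne_of_ne hz1 hz2, if_neg (fun h => hz1 (Fin.ext h)),
          if_neg (fun h => hz2 (Fin.ext h))]
  have hx' : ¬((x : ℕ) = (k : ℕ) ∧ (y : ℕ) = (k' : ℕ)) :=
    fun h => hexcl ⟨Fin.ext h.1, Fin.ext h.2⟩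
  rw [Fin.le_def] at hxy ⊢
  rw [key x, key y]
  split_ifs <;> omega

lemma exists_wstep_pair {e : Fin w.length ≃ Fin w.length} (he : IsLinExt comm w e)
    {k k' : Fin w.length} (hkk : (k' : ℕ) = (k : ℕ) + 1) {i j : Fin w.length}
    (hij : WLe comm w i j) (hi : e i = k) (hj : e j = k') :
    ∃ p q, WStep comm w p q ∧ e p = k ∧ e q = k' := by
  revert hj
  induction hij with
  | single h => exact fun hj => ⟨_, _, h, hi, hj⟩
  | @tail b c hab hbc ih =>
    intro hc
    have h1 : (k : ℕ) ≤ (e b : ℕ) := by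
      have := he _ _ hab; rw [hi] at this; exact this
    have h2 : (e b : ℕ) ≤ (k' : ℕ) := by
      have := he _ _ (Relation.TransGen.single hbc); rw [hc] at this; exact this
    rcases eq_or_ne (e b) k' with hb | hb
    · exact ih hb
    · have hb' : (e b : ℕ) ≠ (k' : ℕ) := fun h => hb (Fin.ext h)
      have hbk : e b = k := Fin.ext (by omega)
      exact ⟨b, c, hbc, hbk, hc⟩

lemma isLinExt_trans_swap (hirr : ∀ a, ¬ comm a a) {e : Fin w.length ≃ Fin w.length}
    (he : IsLinExt comm w e) {k k' : Fin w.length} (hkk : (k' : ℕ) = (k : ℕ) + 1)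
    (hc : comm (w.get (e.symm k)) (w.get (e.symm k'))) :
    IsLinExt comm w (e.trans (Equiv.swap k k')) := by
  intro i j hij
  simp only [Equiv.trans_apply]
  apply swap_mono hkk (he i j hij)
  rintro ⟨hik, hjk⟩
  obtain ⟨p, q, hpq, hp, hq⟩ := exists_wstep_pair he hkk hij hik hjk
  have hp' : p = e.symm k := by rw [← hp]; simp
  have hq' : q = e.symm k' := by rw [← hq]; simp
  rcases hpq.2 with h | h
  · rw [hp', hq'] at h; rw [h] at hc; exact hirr _ hc
  · rw [hp', hq'] at h; exact h hc

lemma wordOf_length (e : Fin w.length ≃ Fin w.length) : (wordOf w e).length = w.length := by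
  simp [wordOf]

lemma wordOf_getElem (e : Fin w.length ≃ Fin w.length) (i : ℕ) (h : i < (wordOf w e).length) :
    (wordOf w e)[i] = w.get (e.symm ⟨i, by simpa [wordOf] using h⟩) := by
  simp [wordOf]

lemma getElem_idx_congr {α : Type*} (l : List α) {i j : ℕ} (h : i = j) (hi : i < l.length) :
    l[i]'hi = l[j]'(h ▸ hi) := by subst h; rfl

lemma list_decomp {α : Type*} (l : List α) (k : ℕ) (hk : k + 1 < l.length) :
    l = l.take k ++ l[k] :: l[k + 1] :: l.drop (k + 2) := by
  conv_lhs => rw [← List.take_append_drop k l]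
  congr 1
  rw [List.drop_eq_getElem_cons (by omega), List.drop_eq_getElem_cons (by omega)]

lemma wordOf_decomp (e : Fin w.length ≃ Fin w.length) {k k' : Fin w.length}
    (hkk : (k' : ℕ) = (k : ℕ) + 1) :
    wordOf w e = (wordOf w e).take k ++
      w.get (e.symm k) :: w.get (e.symm k') :: (wordOf w e).drop ((k : ℕ) + 2) := by
  have hk : (k : ℕ) + 1 < (wordOf w e).length := by
    rw [wordOf_length]; omega
  have trick : ∀ (m : ℕ) (hm : m < w.length) (kf : Fin w.length), m = (kf : ℕ) →
      w.get (e.symm ⟨m, hm⟩) = w.get (e.symm kf) := by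
    rintro m hm kf rfl; rfl
  conv_lhs => rw [list_decomp (wordOf w e) k hk]
  rw [wordOf_getElem, wordOf_getElem, trick _ _ k rfl, trick _ _ k' hkk.symm]

lemma wordOf_trans_swap (e : Fin w.length ≃ Fin w.length) {k k' : Fin w.length}
    (hkk : (k' : ℕ) = (k : ℕ) + 1) :
    wordOf w (e.trans (Equiv.swap k k')) = (wordOf w e).take k ++
      w.get (e.symm k') :: w.get (e.symm k) :: (wordOf w e).drop ((k : ℕ) + 2) := by
  have hk2 : (k : ℕ) + 1 < w.length := hkk ▸ k'.isLt
  apply List.ext_getElem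
  · simp only [wordOf_length, List.length_append, List.length_take, List.length_cons,
      List.length_drop, wordOf_length]
    omega
  · intro i h1 h2
    rw [wordOf_getElem]
    have hsymm : ∀ (hi : i < w.length),
        (e.trans (Equiv.swap k k')).symm ⟨i, hi⟩ = e.symm (Equiv.swap k k' ⟨i, hi⟩) := by
      intro hi
      simp [Equiv.symm_trans_apply]
    rw [hsymm]
    have hlw : (wordOf w e).length = w.length := wordOf_length _
    have htl : ((wordOf w e).take k).length = (k : ℕ) := by
      rw [List.length_take, hlw]; omega
    have hiw : i < w.length := by rwa [wordOf_length] at h1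
    rcases lt_trichotomy i (k : ℕ) with hik | hik | hik
    · rw [List.getElem_append_left (by omega)]
      rw [List.getElem_take, wordOf_getElem]
      have : Equiv.swap k k' ⟨i, by omega⟩ = ⟨i, by omega⟩ := by
        apply Equiv.swap_apply_of_ne_of_ne
        · exact fun h => by simp [Fin.ext_iff] at h; omega
        · exact fun h => by simp [Fin.ext_iff] at h; omega
      rw [this]
    · rw [List.getElem_append_right (by omega)]
      have hx : ⟨i, by omega⟩ = k := Fin.ext (by simp [hik])
      rw [hx, Equiv.swap_apply_left]
      have hidx : i - ((wordOf w e).take k).length = 0 := by omega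
      have hb1 : i - ((wordOf w e).take k).length <
          (w.get (e.symm k') :: w.get (e.symm k) :: (wordOf w e).drop ((k : ℕ) + 2)).length := by
        simp only [List.length_cons]; omega
      have hrw := getElem_idx_congr
        (w.get (e.symm k') :: w.get (e.symm k) :: (wordOf w e).drop ((k : ℕ) + 2)) hidx hb1
      rw [hrw]
      simp only [List.getElem_cons_zero]
    · rw [List.getElem_append_right (by omega)]
      have trick : ∀ (m : ℕ) (hm : m < w.length) (z : Fin w.length), m = (z : ℕ) →
          w.get (e.symm ⟨m, hm⟩) = w.get (e.symm z) := by
        rintro m hm z rfl; rfl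
      rcases eq_or_lt_of_le (show (k : ℕ) + 1 ≤ i by omega) with hik1 | hik1
      · have hx : (⟨i, hiw⟩ : Fin w.length) = k' := Fin.ext (by simp [hkk, ← hik1])
        rw [hx, Equiv.swap_apply_right]
        have hidx : i - ((wordOf w e).take k).length = 1 := by omega
        have hb1 : i - ((wordOf w e).take k).length <
            (w.get (e.symm k') :: w.get (e.symm k) :: (wordOf w e).drop ((k : ℕ) + 2)).length := by
          simp only [List.length_cons]; omega
        have hrw := getElem_idx_congr
          (w.get (e.symm k') :: w.get (e.symm k) :: (wordOf w e).drop ((k : ℕ) + 2)) hidx hb1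
        rw [hrw]
        simp only [List.getElem_cons_succ, List.getElem_cons_zero]
      · have hswap : Equiv.swap k k' (⟨i, hiw⟩ : Fin w.length) = ⟨i, hiw⟩ := by
          apply Equiv.swap_apply_of_ne_of_ne
          · exact fun h => by simp [Fin.ext_iff] at h; omega
          · exact fun h => by simp [Fin.ext_iff] at h; omega
        rw [hswap]
        have hidx : i - ((wordOf w e).take k).length = (i - (k : ℕ) - 2) + 1 + 1 := by omega
        have hb1 : i - ((wordOf w e).take k).length <
            (w.get (e.symm k') :: w.get (e.symm k) :: (wordOf w e).drop ((k : ℕ) + 2)).length := by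
          simp only [List.length_cons, List.length_drop, hlw]; omega
        have hrw := getElem_idx_congr
          (w.get (e.symm k') :: w.get (e.symm k) :: (wordOf w e).drop ((k : ℕ) + 2)) hidx hb1
        rw [hrw]
        simp only [List.getElem_cons_succ]
        have hb2 : (i - (k : ℕ) - 2) < ((wordOf w e).drop ((k : ℕ) + 2)).length := by
          simp only [List.length_drop, hlw]; omega
        have hdrop := List.getElem_drop (xs := wordOf w e) (i := (k : ℕ) + 2) (j := i - (k : ℕ) - 2)
          (h := hb2)
        rw [hdrop]
        have hb3 : (k : ℕ) + 2 + (i - (k : ℕ) - 2) < (wordOf w e).length := by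
          rw [hlw]; omega
        have hweq := wordOf_getElem e ((k : ℕ) + 2 + (i - (k : ℕ) - 2)) hb3
        rw [hweq]
        exact (trick _ (by omega) ⟨i, hiw⟩
          (by show (k : ℕ) + 2 + (i - (k : ℕ) - 2) = i; omega)).symm

end Helpers

theorem linext_bijection_commClass {S : Type*} (comm : S → S → Prop)
    (hsym : ∀ a b, comm a b → comm b a) (hirr : ∀ a, ¬ comm a a) (w : List S) :
    (∀ e : Fin w.length ≃ Fin w.length, IsLinExt comm w e → CommClass comm w (wordOf w e)) ∧
    (∀ e f : Fin w.length ≃ Fin w.length, IsLinExt comm w e → IsLinExt comm w f →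
      wordOf w e = wordOf w f → e = f) ∧
    (∀ w', CommClass comm w w' →
      ∃ e : Fin w.length ≃ Fin w.length, IsLinExt comm w e ∧ wordOf w e = w') := by
  have hword_refl : wordOf w (Equiv.refl (Fin w.length)) = w := List.ofFn_get w
  refine ⟨?_, ?_, ?_⟩
  · -- Part 1
    have main : ∀ (N : ℕ) (e : Fin w.length ≃ Fin w.length),
        (Finset.univ.filter
          (fun p : Fin w.length × Fin w.length => p.1 < p.2 ∧ e p.2 < e p.1)).card ≤ N →
        IsLinExt comm w e → CommClass comm w (wordOf w e) := by
      intro N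
      induction N with
      | zero =>
        intro e hcard he
        have hmono : StrictMono e := by
          intro i j hij
          by_contra hle
          have hji : e j < e i := lt_of_le_of_ne (not_lt.mp hle)
            (fun h => hij.ne (e.injective h.symm))
          have hmem : (i, j) ∈ Finset.univ.filter
              (fun p : Fin w.length × Fin w.length => p.1 < p.2 ∧ e p.2 < e p.1) := by
            simp [hij, hji]
          have := Finset.card_eq_zero.mp (Nat.le_zero.mp hcard)
          rw [this] at hmem
          exact absurd hmem (Finset.notMem_empty _)
        rw [equiv_eq_refl_of_strictMono hmono, hword_refl]
        exact Relation.ReflTransGen.refl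
      | succ N ih =>
        intro e hcard he
        by_cases hrefl : e = Equiv.refl (Fin w.length)
        · rw [hrefl, hword_refl]
          exact Relation.ReflTransGen.refl
        · have hns : ¬ StrictMono e.symm := by
            intro hs
            have := equiv_eq_refl_of_strictMono hs
            apply hrefl
            have := congrArg Equiv.symm this
            simpa using this
          have hdes : ¬ ∀ (k : ℕ) (hk : k + 1 < w.length),
              e.symm ⟨k, by omega⟩ < e.symm ⟨k + 1, hk⟩ :=
            fun h => hns (strictMono_of_succ h)
          push_neg at hdes
          obtain ⟨k, hk, hdes⟩ := hdes
          set kk : Fin w.length := ⟨k, by omega⟩ with hkkdef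
          set kk' : Fin w.length := ⟨k + 1, hk⟩ with hkk'def
          have hkk : (kk' : ℕ) = (kk : ℕ) + 1 := rfl
          have hqp : e.symm kk' < e.symm kk :=
            lt_of_le_of_ne hdes
              (fun h => by
                have := e.symm.injective h
                simp [hkkdef, hkk'def, Fin.ext_iff] at this)
          have hcomm : w.get (e.symm kk') ≠ w.get (e.symm kk) ∧
              comm (w.get (e.symm kk')) (w.get (e.symm kk)) := by
            by_contra hc
            have hstep : WStep comm w (e.symm kk') (e.symm kk) := ⟨hqp.le, by tauto⟩
            have := he _ _ (Relation.TransGen.single hstep)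
            simp only [Equiv.apply_symm_apply] at this
            rw [Fin.le_def] at this
            simp [hkkdef, hkk'def] at this
          have hcm : comm (w.get (e.symm kk)) (w.get (e.symm kk')) := hsym _ _ hcomm.2
          set f := e.trans (Equiv.swap kk kk') with hfdef
          have hfle : IsLinExt comm w f := isLinExt_trans_swap hirr he hkk hcm
          have hsub : Finset.univ.filter
              (fun p : Fin w.length × Fin w.length => p.1 < p.2 ∧ f p.2 < f p.1) ⊆
              Finset.univ.filter
              (fun p : Fin w.length × Fin w.length => p.1 < p.2 ∧ e p.2 < e p.1) := by
            intro pr hmem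
            simp only [Finset.mem_filter, Finset.mem_univ, true_and] at hmem ⊢
            refine ⟨hmem.1, ?_⟩
            by_contra hle
            rcases Classical.em (e pr.1 = kk ∧ e pr.2 = kk') with hcase | hcase
            · have h1 : pr.1 = e.symm kk := by rw [← hcase.1]; simp
              have h2 : pr.2 = e.symm kk' := by rw [← hcase.2]; simp
              have := hmem.1
              rw [h1, h2] at this
              exact absurd this (lt_asymm hqp)
            · have := swap_mono hkk (not_lt.mp hle) hcase
              simp only [hfdef, Equiv.trans_apply] at hmem
              exact absurd hmem.2 (not_lt.mpr this)
          have hwit : ((e.symm kk'), (e.symm kk)) ∈ Finset.univ.filter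
              (fun p : Fin w.length × Fin w.length => p.1 < p.2 ∧ e p.2 < e p.1) ∧
              ((e.symm kk'), (e.symm kk)) ∉ Finset.univ.filter
              (fun p : Fin w.length × Fin w.length => p.1 < p.2 ∧ f p.2 < f p.1) := by
            constructor
            · simp only [Finset.mem_filter, Finset.mem_univ, true_and]
              refine ⟨hqp, ?_⟩
              simp only [Equiv.apply_symm_apply]
              rw [Fin.lt_def]
              simp [hkkdef, hkk'def]
            · simp only [Finset.mem_filter, Finset.mem_univ, true_and, not_and]
              intro _
              simp only [hfdef, Equiv.trans_apply, Equiv.apply_symm_apply,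
                Equiv.swap_apply_left, Equiv.swap_apply_right]
              rw [not_lt, Fin.le_def]
              simp [hkkdef, hkk'def]
          have hcard' : (Finset.univ.filter
              (fun p : Fin w.length × Fin w.length => p.1 < p.2 ∧ f p.2 < f p.1)).card ≤ N := by
            have := Finset.card_lt_card
              ((Finset.ssubset_iff_of_subset hsub).mpr ⟨_, hwit.1, hwit.2⟩)
            omega
          have hclass := ih f hcard' hfle
          refine Relation.ReflTransGen.tail hclass ?_
          refine ⟨(wordOf w e).take k, (wordOf w e).drop (k + 2),
            w.get (e.symm kk'), w.get (e.symm kk), hcomm.2, ?_, ?_⟩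
          · exact wordOf_trans_swap e hkk
          · exact wordOf_decomp e hkk
    exact fun e he => main _ e le_rfl he
  · -- Part 2
    intro e f he hf hw
    have hget : ∀ i, w.get (e.symm i) = w.get (f.symm i) := by
      have := List.ofFn_inj.mp hw
      exact fun i => congrFun this i
    by_contra hne
    have hex : ∃ i, e.symm i ≠ f.symm i := by
      by_contra hall
      push_neg at hall
      apply hne
      have := congrArg Equiv.symm (Equiv.ext hall)
      simpa using this
    classical
    set s := Finset.univ.filter (fun i => e.symm i ≠ f.symm i) with hsdef
    have hsne : s.Nonempty := by
      obtain ⟨i, hi⟩ := hex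
      exact ⟨i, by simp [hsdef, hi]⟩
    set k := s.min' hsne with hkdef
    have hkmem : e.symm k ≠ f.symm k := by
      have := s.min'_mem hsne
      simpa [hsdef] using this
    have hmin : ∀ j, j < k → e.symm j = f.symm j := by
      intro j hj
      by_contra hjne
      have : j ∈ s := by simp [hsdef, hjne]
      exact absurd (s.min'_le j this) (not_le.mpr hj)
    set p := e.symm k with hpdef
    set q := f.symm k with hqdef
    have hletters : w.get p = w.get q := hget k
    have hfp : k < f p := by
      rcases lt_trichotomy (f p) k with h | h | h
      · exfalso
        have := hmin (f p) h
        have : e.symm (f p) = p := by rw [this]; simp [hpdef]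
        have := e.symm.injective (this.trans (by rw [hpdef]))
        exact absurd this h.ne
      · exfalso
        apply hkmem
        rw [hqdef, ← h, Equiv.symm_apply_apply]
      · exact h
    have heq : k < e q := by
      rcases lt_trichotomy (e q) k with h | h | h
      · exfalso
        have h2 := hmin (e q) h
        have h3 : f.symm (e q) = q := by rw [← h2]; simp [hqdef]
        have := f.symm.injective (h3.trans (by rw [hqdef]))
        exact absurd this h.ne
      · exfalso
        apply hkmem
        rw [hpdef, ← h, Equiv.symm_apply_apply]
      · exact h
    rcases lt_trichotomy p q with h | h | h
    · have hstep : WStep comm w p q := ⟨h.le, Or.inl hletters⟩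
      have := hf _ _ (Relation.TransGen.single hstep)
      rw [show f q = k by simp [hqdef]] at this
      exact absurd this (not_le.mpr hfp)
    · exact hkmem (by rw [hpdef, hqdef] at h ⊢; exact h)
    · have hstep : WStep comm w q p := ⟨h.le, Or.inl hletters.symm⟩
      have := he _ _ (Relation.TransGen.single hstep)
      rw [show e p = k by simp [hpdef]] at this
      exact absurd this (not_le.mpr heq)
  · -- Part 3
    intro w' h
    induction h with
    | refl => exact ⟨Equiv.refl _, fun i j hij => wle_le hij, hword_refl⟩
    | tail hcc hmove ih =>
      obtain ⟨e, he, hwe⟩ := ih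
      obtain ⟨u, v, a, b, hab, h1, h2⟩ := hmove
      set k := u.length with hkdef
      have hlen : k + 1 < w.length := by
        have := congrArg List.length (hwe.trans h1)
        simp [wordOf] at this
        omega
      set kk : Fin w.length := ⟨k, by omega⟩ with hkkdef
      set kk' : Fin w.length := ⟨k + 1, hlen⟩ with hkk'def
      have hkk : (kk' : ℕ) = (kk : ℕ) + 1 := rfl
      have h3 : wordOf w e = u ++ a :: b :: v := hwe.trans h1
      have hlen2 : (wordOf w e).length = w.length := wordOf_length e
      have ha : w.get (e.symm kk) = a := by
        have hget : (wordOf w e)[k]'(by omega) = (u ++ a :: b :: v)[k]'(by rw [← h3]; omega) := by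
          congr 1
        rw [wordOf_getElem] at hget
        rw [List.getElem_append_right (le_refl _)] at hget
        simpa [hkkdef] using hget
      have hb : w.get (e.symm kk') = b := by
        have hget : (wordOf w e)[k + 1]'(by omega) =
            (u ++ a :: b :: v)[k + 1]'(by rw [← h3]; omega) := by
          congr 1
        rw [wordOf_getElem] at hget
        rw [List.getElem_append_right (by omega)] at hget
        have hrw := getElem_idx_congr (a :: b :: v) (show k + 1 - u.length = 1 by omega)
          (by simp only [List.length_cons]; omega)
        rw [hrw] at hget
        simpa [hkkdef, hkk'def] using hget
      have hcm : comm (w.get (e.symm kk)) (w.get (e.symm kk')) := by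
        rw [ha, hb]; exact hab
      refine ⟨e.trans (Equiv.swap kk kk'), isLinExt_trans_swap hirr he hkk hcm, ?_⟩
      rw [wordOf_trans_swap e hkk, h2, ha, hb]
      have htake : (wordOf w e).take k = u := by
        rw [h3]; exact List.take_left
      have hdrop : (wordOf w e).drop (k + 2) = v := by
        rw [h3]
        have : u ++ a :: b :: v = (u ++ [a, b]) ++ v := by simp
        rw [this]
        exact List.drop_left' (by simp [hkdef])
      rw [htake, hdrop]
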